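/- Let α > 1 and let μ_i, μ_j, x, y ∈ ℝ^d satisfy α·‖x − μ_i‖ < ‖x − μ_j‖ and α·‖y − μ_i‖ < ‖y − μ_j‖ (as holds when x, y ∈ C_i in an α-center-proximal clustering). Then ‖x − y‖ < (2α/(α² − 1))·‖μ_i − μ_j‖. In particular, the diameter of any cluster C_i of an α-center-proximal clustering is at most (2α/(α² − 1))·‖μ_i − μ_j‖ for every j ≠ i. -/

import Mathlib

open scoped RealInnerProductSpace

/-- Apollonius-ball lemma: if `α‖z − μi‖ < ‖z − μj‖`, then `z` lies in the open ball of
radius `α‖μi − μj‖/(α² − 1)` centered at `(α² − 1)⁻¹ • (α² • μi − μj)`. -/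
lemma apollonius_aux (d : ℕ) (α : ℝ) (hα : 1 < α)
    (μi μj z : EuclideanSpace ℝ (Fin d))
    (hz : α * ‖z - μi‖ < ‖z - μj‖) :
    ‖z - (α ^ 2 - 1)⁻¹ • (α ^ 2 • μi - μj)‖ < α / (α ^ 2 - 1) * ‖μi - μj‖ := by
  have hβ : (0:ℝ) < α ^ 2 - 1 := by nlinarith
  set c : EuclideanSpace ℝ (Fin d) := (α ^ 2 - 1)⁻¹ • (α ^ 2 • μi - μj) with hc
  have hkey : (α ^ 2 - 1) • (z - c) = α ^ 2 • (z - μi) - (z - μj) := by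
    rw [hc, smul_sub, smul_inv_smul₀ (ne_of_gt hβ)]
    module
  have hnorm : (α ^ 2 - 1) * ‖z - c‖ = ‖α ^ 2 • (z - μi) - (z - μj)‖ := by
    rw [← hkey, norm_smul, Real.norm_eq_abs, abs_of_pos hβ]
  set u := z - μi with hu
  set v := z - μj with hv
  have hD : μi - μj = v - u := by rw [hu, hv]; abel
  have h1 : ‖α ^ 2 • u - v‖ ^ 2
      = α ^ 4 * ‖u‖ ^ 2 - 2 * α ^ 2 * (inner ℝ u v : ℝ) + ‖v‖ ^ 2 := by
    have e := @norm_sub_sq_real _ _ _ (α ^ 2 • u) v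
    rw [real_inner_smul_left, norm_smul, Real.norm_eq_abs,
      abs_of_pos (by positivity : (0:ℝ) < α ^ 2)] at e
    rw [e]; ring
  have h2 : ‖v - u‖ ^ 2 = ‖v‖ ^ 2 - 2 * (inner ℝ u v : ℝ) + ‖u‖ ^ 2 := by
    rw [norm_sub_sq_real, real_inner_comm]
  have hz2 : α ^ 2 * ‖u‖ ^ 2 < ‖v‖ ^ 2 := by
    have h0 : 0 ≤ α * ‖u‖ := by positivity
    nlinarith [hz]
  have hsq : ((α ^ 2 - 1) * ‖z - c‖) ^ 2 < (α * ‖μi - μj‖) ^ 2 := by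
    rw [hnorm, hD]
    have := h1
    nlinarith [h1, h2, hz2, hβ]
  have hstep : (α ^ 2 - 1) * ‖z - c‖ < α * ‖μi - μj‖ := by
    have hr : (0:ℝ) ≤ α * ‖μi - μj‖ := by positivity
    exact lt_of_pow_lt_pow_left₀ 2 hr hsq
  rw [div_mul_eq_mul_div, lt_div_iff₀ hβ]
  linarith [hstep, mul_comm (α ^ 2 - 1) ‖z - c‖]

/-- Two points of the same cluster of an α-center-proximal clustering are at distance less than
`(2α/(α² − 1))‖μi − μj‖`; in particular the diameter of a cluster `C_i` is at most
`(2α/(α² − 1))‖μi − μj‖` for every `j ≠ i`. -/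
theorem center_proximity_cluster_diam (d : ℕ) (α : ℝ) (hα : 1 < α)
    (μi μj x y : EuclideanSpace ℝ (Fin d))
    (hx : α * ‖x - μi‖ < ‖x - μj‖)
    (hy : α * ‖y - μi‖ < ‖y - μj‖) :
    ‖x - y‖ < (2 * α / (α ^ 2 - 1)) * ‖μi - μj‖ := by
  set c : EuclideanSpace ℝ (Fin d) := (α ^ 2 - 1)⁻¹ • (α ^ 2 • μi - μj) with hc
  have h1 := apollonius_aux d α hα μi μj x hx
  have h2 := apollonius_aux d α hα μi μj y hy
  have htri : ‖x - y‖ ≤ ‖x - c‖ + ‖y - c‖ := by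
    have : x - y = (x - c) - (y - c) := by abel
    rw [this]
    exact norm_sub_le _ _
  have : (2 * α / (α ^ 2 - 1)) * ‖μi - μj‖
      = α / (α ^ 2 - 1) * ‖μi - μj‖ + α / (α ^ 2 - 1) * ‖μi - μj‖ := by ring
  rw [this]
  calc ‖x - y‖ ≤ ‖x - c‖ + ‖y - c‖ := htri
    _ < _ := add_lt_add h1 h2
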